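/- Let d and N be positive integers, let λ₀ ≥ 1 be a real number, and let G₁, …, G_N be real symmetric positive semidefinite d×d matrices, each with all eigenvalues at most 1 (i.e., I − Gₙ is positive semidefinite for each n). Define M₀ = λ₀·I and Mₙ = Mₙ₋₁ + Gₙ for n = 1, …, N. Then 2·log det(M_N) − 2·log det(λ₀·I) ≥ Σ_{n=1}^N trace(Gₙ · Mₙ₋₁⁻¹). -/

import Mathlib

open Matrix

lemma scalar_key {x : ℝ} (h0 : 0 ≤ x) (h1 : x ≤ 1) : x ≤ 2 * Real.log (1 + x) := by
  have hx : (0:ℝ) < 1 + x := by linarith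
  have h := Real.log_le_sub_one_of_pos (inv_pos.mpr hx)
  rw [Real.log_inv] at h
  have hinv : (1 + x)⁻¹ * (1 + x) = 1 := inv_mul_cancel₀ hx.ne'
  nlinarith [h]

variable {d : ℕ}

open scoped MatrixOrder in
lemma step_lemma {M G : Matrix (Fin d) (Fin d) ℝ}
    (hM : M.PosDef) (hM1 : (M - 1).PosSemidef) (hG : G.PosSemidef)
    (hG1 : ((1 : Matrix (Fin d) (Fin d) ℝ) - G).PosSemidef) :
    Matrix.trace (G * M⁻¹) ≤ 2 * Real.log (M + G).det - 2 * Real.log M.det := by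
  classical
  set S := CFC.sqrt M with hSdef
  have hS : S.PosSemidef := (CFC.sqrt_nonneg M).posSemidef
  have hSS : S * S = M := CFC.sqrt_mul_sqrt_self M hM.posSemidef.nonneg
  have hdetS : S.det * S.det = M.det := by rw [← det_mul, hSS]
  have hMdet : 0 < M.det := hM.det_pos
  have hdetS0 : S.det ≠ 0 := by
    intro h; rw [h, mul_zero] at hdetS; exact hMdet.ne' hdetS.symm
  have hSunit : IsUnit S.det := isUnit_iff_ne_zero.mpr hdetS0
  have hSi : S * S⁻¹ = 1 := mul_nonsing_inv _ hSunit
  have hiS : S⁻¹ * S = 1 := nonsing_inv_mul _ hSunit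
  have hSh : S⁻¹ᴴ = S⁻¹ := by rw [conjTranspose_nonsing_inv, hS.1]
  set X := S⁻¹ * G * S⁻¹ with hXdef
  have hX : X.PosSemidef := by
    have := hG.conjTranspose_mul_mul_same S⁻¹
    rwa [hSh] at this
  have hMinv : M⁻¹ = S⁻¹ * S⁻¹ := by rw [← hSS, Matrix.mul_inv_rev]
  have hone : S⁻¹ * M * S⁻¹ = 1 := by
    rw [← hSS, ← mul_assoc, hiS, one_mul, hSi]
  have h1X : ((1 : Matrix (Fin d) (Fin d) ℝ) - X).PosSemidef := by
    have key : (1 : Matrix (Fin d) (Fin d) ℝ) - X = S⁻¹ * ((M - 1) + (1 - G)) * S⁻¹ := by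
      have : (M - 1) + ((1:Matrix (Fin d) (Fin d) ℝ) - G) = M - G := by abel
      rw [this, Matrix.mul_sub, Matrix.sub_mul, hone, hXdef]
    rw [key]
    have := (hM1.add hG1).conjTranspose_mul_mul_same S⁻¹
    rwa [hSh] at this
  have hμ0 : ∀ i, 0 ≤ hX.1.eigenvalues i := hX.eigenvalues_nonneg
  have hμ1 : ∀ i, hX.1.eigenvalues i ≤ 1 := by
    intro i
    have hvnorm : star ⇑(hX.1.eigenvectorBasis i) ⬝ᵥ ⇑(hX.1.eigenvectorBasis i) = 1 := by
      have h2 := hX.1.eigenvectorBasis.orthonormal.1 i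
      have := EuclideanSpace.inner_eq_star_dotProduct (𝕜 := ℝ) (hX.1.eigenvectorBasis i)
        (hX.1.eigenvectorBasis i)
      rw [real_inner_self_eq_norm_sq, h2] at this
      simpa using this.symm
    have hnn := h1X.re_dotProduct_nonneg ⇑(hX.1.eigenvectorBasis i)
    have heq := hX.1.eigenvalues_eq i
    simp only [sub_mulVec, one_mulVec, dotProduct_sub, RCLike.re_to_real, hvnorm] at hnn heq
    linarith
  set U : Matrix (Fin d) (Fin d) ℝ := (hX.1.eigenvectorUnitary : Matrix (Fin d) (Fin d) ℝ)
    with hUdef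
  have hUU : U * star U = 1 := mem_unitaryGroup_iff.mp hX.1.eigenvectorUnitary.2
  have hUU' : star U * U = 1 := mem_unitaryGroup_iff'.mp hX.1.eigenvectorUnitary.2
  set D : Matrix (Fin d) (Fin d) ℝ := diagonal (RCLike.ofReal ∘ hX.1.eigenvalues) with hDdef
  have hspec : X = U * D * star U := hX.1.spectral_theorem
  have htr : Matrix.trace X = ∑ i, hX.1.eigenvalues i := by
    conv_lhs => rw [hspec]
    rw [Matrix.trace_mul_cycle, hUU', one_mul, hDdef, trace_diagonal]
    simp
  have hdet1X : (1 + X).det = ∏ i, (1 + hX.1.eigenvalues i) := by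
    have h1 : (1 : Matrix (Fin d) (Fin d) ℝ) + X = U * (1 + D) * star U := by
      rw [Matrix.mul_add, Matrix.mul_one, Matrix.add_mul, hUU, ← hspec]
    have h2 : (1 : Matrix (Fin d) (Fin d) ℝ) + D = diagonal (fun i => 1 + hX.1.eigenvalues i) := by
      rw [hDdef, ← diagonal_one, diagonal_add]
      simp [Function.comp]
    have h3 : U.det * (star U).det = 1 := by rw [← det_mul, hUU, det_one]
    rw [h1, det_mul, det_mul, h2, det_diagonal]
    linear_combination (∏ i, (1 + hX.1.eigenvalues i)) * h3
  have hMG : M + G = S * (1 + X) * S := by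
    rw [Matrix.mul_add, Matrix.mul_one, Matrix.add_mul, hSS, hXdef]
    congr 1
    rw [← mul_assoc, ← mul_assoc, hSi, one_mul, mul_assoc, hiS, mul_one]
  have hdetMG : (M + G).det = M.det * ∏ i, (1 + hX.1.eigenvalues i) := by
    rw [hMG, det_mul, det_mul, hdet1X]
    linear_combination (∏ i, (1 + hX.1.eigenvalues i)) * hdetS
  have hprodpos : (0:ℝ) < ∏ i, (1 + hX.1.eigenvalues i) :=
    Finset.prod_pos fun i _ => by linarith [hμ0 i]
  have hlog : Real.log (M + G).det = Real.log M.det + ∑ i, Real.log (1 + hX.1.eigenvalues i) := by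
    rw [hdetMG, Real.log_mul hMdet.ne' hprodpos.ne', Real.log_prod]
    intro i _
    have := hμ0 i; positivity
  have htrGM : Matrix.trace (G * M⁻¹) = Matrix.trace X := by
    rw [hMinv, hXdef, ← mul_assoc, Matrix.trace_mul_cycle]
  rw [htrGM, htr, hlog]
  have hsum : ∑ i, hX.1.eigenvalues i ≤ ∑ i, 2 * Real.log (1 + hX.1.eigenvalues i) :=
    Finset.sum_le_sum fun i _ => scalar_key (hμ0 i) (hμ1 i)
  have hexp : 2 * (Real.log M.det + ∑ i, Real.log (1 + hX.1.eigenvalues i))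
      - 2 * Real.log M.det = ∑ i, 2 * Real.log (1 + hX.1.eigenvalues i) := by
    rw [mul_add, Finset.mul_sum]; ring
  rw [hexp]
  exact hsum

/-- Log-determinant potential lemma (Lemma 14): for `M₀ = λ₀ I` and `Mₙ = Mₙ₋₁ + Gₙ` with
each `Gₙ` PSD with eigenvalues at most 1,
`2 log det M_N - 2 log det (λ₀ I) ≥ Σₙ trace (Gₙ Mₙ₋₁⁻¹)`. -/
theorem stmt_1 (d N : ℕ) (hd : 0 < d) (hN : 0 < N) (lam0 : ℝ) (hlam0 : 1 ≤ lam0)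
    (G M : ℕ → Matrix (Fin d) (Fin d) ℝ)
    (hG : ∀ n ∈ Finset.Icc 1 N, (G n).PosSemidef)
    (hG1 : ∀ n ∈ Finset.Icc 1 N, ((1 : Matrix (Fin d) (Fin d) ℝ) - G n).PosSemidef)
    (hM0 : M 0 = lam0 • (1 : Matrix (Fin d) (Fin d) ℝ))
    (hMrec : ∀ n ∈ Finset.Icc 1 N, M n = M (n - 1) + G n) :
    ∑ n ∈ Finset.Icc 1 N, Matrix.trace (G n * (M (n - 1))⁻¹)
      ≤ 2 * Real.log (M N).det
        - 2 * Real.log ((lam0 • (1 : Matrix (Fin d) (Fin d) ℝ)).det) := by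
  classical
  have key : ∀ k : ℕ, k ≤ N → (M k).PosDef ∧ ((M k) - 1).PosSemidef ∧
      ∑ n ∈ Finset.Icc 1 k, Matrix.trace (G n * (M (n - 1))⁻¹)
        ≤ 2 * Real.log (M k).det - 2 * Real.log (M 0).det := by
    intro k
    induction k with
    | zero =>
      intro _
      refine ⟨?_, ?_, by simp⟩
      · rw [hM0, smul_one_eq_diagonal]
        exact PosDef.diagonal (fun i => by linarith)
      · rw [hM0]
        have h : lam0 • (1 : Matrix (Fin d) (Fin d) ℝ) - 1
            = (lam0 - 1) • (1 : Matrix (Fin d) (Fin d) ℝ) := by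
          rw [sub_smul, one_smul]
        rw [h, smul_one_eq_diagonal]
        exact posSemidef_diagonal_iff.mpr (fun i => by linarith)
    | succ k ih =>
      intro hk1
      have hk : k ≤ N := Nat.le_of_succ_le hk1
      obtain ⟨hPD, hPS, hsum⟩ := ih hk
      have hmem : k + 1 ∈ Finset.Icc 1 N :=
        Finset.mem_Icc.mpr ⟨Nat.succ_le_succ (Nat.zero_le k), hk1⟩
      have hrec := hMrec (k + 1) hmem
      simp only [Nat.add_sub_cancel] at hrec
      have hGk := hG (k + 1) hmem
      have hG1k := hG1 (k + 1) hmem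
      have hstep := step_lemma hPD hPS hGk hG1k
      refine ⟨?_, ?_, ?_⟩
      · rw [hrec]; exact hPD.add_posSemidef hGk
      · rw [hrec]
        have h : M k + G (k + 1) - 1 = (M k - 1) + G (k + 1) := by abel
        rw [h]; exact hPS.add hGk
      · rw [Finset.sum_Icc_succ_top (Nat.succ_le_succ (Nat.zero_le k))]
        simp only [Nat.add_sub_cancel]
        rw [hrec]
        linarith
  obtain ⟨_, _, h⟩ := key N le_rfl
  rw [hM0] at h
  exact h
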